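/- (Spectral estimate for the GenEO-2 preconditioner with inexact coarse solve) Assume: ∑_{i=1}^N R_iᵀ D_i R_i = I; ‖∑_{i=1}^N R_iᵀ V_i‖_A² ≤ k₀ ∑_{i=1}^N ‖R_iᵀ V_i‖_A² for all V_i; μ′ ⟨Ẽ u, u⟩ ≤ ⟨E u, u⟩ ≤ μ ⟨Ẽ u, u⟩ for all u ∈ ℝᵐ with μ, μ′ > 0. For each i = 1,…,N let B_i be a symmetric positive definite n_i×n_i matrix, V_i ⊆ ℝ^{n_i} a subspace with R_iᵀ D_i (V_i) ⊆ V₀, W_i the B_i-orthogonal complement of V_i, ξ_i the B_i-orthogonal projection onto V_i, q_i the Euclidean orthogonal projection onto W_i, and B_i† := (I − ξ_i) B_i⁻¹; assume ‖R_iᵀ D_i v‖_A² ≤ γ ⟨B_i v, v⟩ for all v ∈ W_i, and that there exist linear maps p_j : ℝ^{n_j} → ℝ^{n_j} with range(R_jᵀ D_j p_j) ⊆ V₀, range(I − p_j) ⊆ W_j, and ∑_{j=1}^N ⟨B_j (I − p_j) R_j U, (I − p_j) R_j U⟩ ≤ (k₁/τ) ⟨A U, U⟩ for all U. Set ε_A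 := ‖P₀ − P̃₀‖_A, c_T := 1 / ( (1/μ′) (1 + ε_A √(k₀ k₁ γ / τ))² + k₁/τ ), c_R := [ k₀ γ (1 + ε_A²) + μ + √( (k₀ γ (1 + ε_A²) − μ)² + 4 μ k₀ γ ε_A² ) ] / 2, and define M⁻¹ := Z Ẽ⁻¹ Zᵀ + (I − P̃₀) ( ∑_{i=1}^N R_iᵀ D_i q_i B_i† q_i D_i R_i ) (I − P̃₀ᵀ). Then every eigenvalue λ of M⁻¹ A (i.e., every λ ∈ ℝ such that M⁻¹ A U = λ U for some U ≠ 0) satisfies c_T ≤ λ ≤ c_R. -/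

import Mathlib

open Matrix

/-- The norm induced by an SPD matrix `A`: `‖x‖_A = √(⟨A x, x⟩)`. -/
noncomputable def aNorm {n : ℕ} (A : Matrix (Fin n) (Fin n) ℝ) (x : Fin n → ℝ) : ℝ :=
  Real.sqrt ((A *ᵥ x) ⬝ᵥ x)

/-- The operator norm of a matrix `M` induced by the `A`-norm. -/
noncomputable def aOpNorm {n : ℕ} (A M : Matrix (Fin n) (Fin n) ℝ) : ℝ :=
  sSup { t : ℝ | ∃ x : Fin n → ℝ, x ≠ 0 ∧ t = aNorm A (M *ᵥ x) / aNorm A x }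

section Helpers

lemma sum_mulVec' {ι α β : Type*} [Fintype ι] [Fintype β] [DecidableEq β]
    (f : ι → Matrix α β ℝ) (x : β → ℝ) :
    (∑ i, f i) *ᵥ x = ∑ i, (f i *ᵥ x) := by
  classical
  induction (Finset.univ : Finset ι) using Finset.induction with
  | empty => simp
  | insert _ _ h ih => simp [Finset.sum_insert h, Matrix.add_mulVec, ih]

lemma dot_mulVec_symm {α β : Type*} [Fintype α] [Fintype β]
    (M : Matrix α β ℝ) (x : β → ℝ) (y : α → ℝ) :
    (M *ᵥ x) ⬝ᵥ y = x ⬝ᵥ (Mᵀ *ᵥ y) := by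
  rw [Matrix.mulVec_transpose, dotProduct_comm, Matrix.dotProduct_mulVec,
    dotProduct_comm]

lemma quad_nonneg_sq_le {a b c : ℝ} (h : ∀ t : ℝ, 0 ≤ a*t^2 + 2*b*t + c) : b^2 ≤ a*c := by
  have h2 : discrim a (2*b) c ≤ 0 :=
    discrim_le_zero (fun t => by have := h t; linarith)
  simp [discrim] at h2; nlinarith

variable {k : ℕ} {A : Matrix (Fin k) (Fin k) ℝ}

lemma cs_psd (hsym : Aᵀ = A) (hpsd : ∀ z, 0 ≤ (A *ᵥ z) ⬝ᵥ z) (x y : Fin k → ℝ) :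
    ((A *ᵥ x) ⬝ᵥ y)^2 ≤ ((A *ᵥ x) ⬝ᵥ x) * ((A *ᵥ y) ⬝ᵥ y) := by
  have hxy : (A *ᵥ y) ⬝ᵥ x = (A *ᵥ x) ⬝ᵥ y := by
    rw [dot_mulVec_symm, hsym, dotProduct_comm]
  have key : ∀ t : ℝ, 0 ≤ ((A*ᵥy)⬝ᵥy) * t^2 + 2*((A*ᵥx)⬝ᵥy)*t + ((A*ᵥx)⬝ᵥx) := by
    intro t
    have h0 := hpsd (x + t • y)
    have hexp : (A *ᵥ (x + t • y)) ⬝ᵥ (x + t • y)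
        = ((A*ᵥy)⬝ᵥy) * t^2 + 2*((A*ᵥx)⬝ᵥy)*t + ((A*ᵥx)⬝ᵥx) := by
      rw [Matrix.mulVec_add, Matrix.mulVec_smul]
      simp [add_dotProduct, smul_dotProduct, dotProduct_add,
        dotProduct_smul, smul_eq_mul, hxy]
      ring
    rw [hexp] at h0; exact h0
  have := quad_nonneg_sq_le key
  linarith [this]

lemma aNorm_nonneg (x : Fin k → ℝ) : 0 ≤ aNorm A x := Real.sqrt_nonneg _

lemma aNorm_sq (hpsd : ∀ z, 0 ≤ (A *ᵥ z) ⬝ᵥ z) (x : Fin k → ℝ) :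
    (aNorm A x)^2 = (A *ᵥ x) ⬝ᵥ x := Real.sq_sqrt (hpsd x)

lemma dot_le_aNorm_mul (hsym : Aᵀ = A) (hpsd : ∀ z, 0 ≤ (A *ᵥ z) ⬝ᵥ z) (x y : Fin k → ℝ) :
    (A *ᵥ x) ⬝ᵥ y ≤ aNorm A x * aNorm A y := by
  have h := cs_psd hsym hpsd x y
  have h2 : (A *ᵥ x) ⬝ᵥ y ≤ |((A *ᵥ x) ⬝ᵥ y)| := le_abs_self _
  have h3 : |((A *ᵥ x) ⬝ᵥ y)| = Real.sqrt (((A *ᵥ x) ⬝ᵥ y)^2) := (Real.sqrt_sq_eq_abs _).symm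
  calc (A *ᵥ x) ⬝ᵥ y ≤ Real.sqrt (((A *ᵥ x) ⬝ᵥ y)^2) := by rw [← h3]; exact h2
    _ ≤ Real.sqrt (((A *ᵥ x) ⬝ᵥ x) * ((A *ᵥ y) ⬝ᵥ y)) := Real.sqrt_le_sqrt h
    _ = aNorm A x * aNorm A y := by
        rw [aNorm, aNorm, ← Real.sqrt_mul (hpsd x)]

lemma aNorm_triangle (hsym : Aᵀ = A) (hpsd : ∀ z, 0 ≤ (A *ᵥ z) ⬝ᵥ z) (x y : Fin k → ℝ) :
    aNorm A (x + y) ≤ aNorm A x + aNorm A y := by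
  have hxy := dot_le_aNorm_mul hsym hpsd x y
  have hyx : (A *ᵥ y) ⬝ᵥ x = (A *ᵥ x) ⬝ᵥ y := by
    rw [dot_mulVec_symm, hsym, dotProduct_comm]
  have hexp : (A *ᵥ (x + y)) ⬝ᵥ (x + y)
      = ((A*ᵥx)⬝ᵥx) + 2*((A*ᵥx)⬝ᵥy) + ((A*ᵥy)⬝ᵥy) := by
    rw [Matrix.mulVec_add]
    simp [add_dotProduct, dotProduct_add, hyx]; ring
  have hx := aNorm_sq hpsd x; have hy := aNorm_sq hpsd y
  calc aNorm A (x + y) = Real.sqrt ((A *ᵥ (x + y)) ⬝ᵥ (x + y)) := rfl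
    _ ≤ Real.sqrt ((aNorm A x + aNorm A y)^2) := Real.sqrt_le_sqrt (by rw [hexp]; nlinarith [hxy])
    _ = aNorm A x + aNorm A y := Real.sqrt_sq (add_nonneg (aNorm_nonneg x) (aNorm_nonneg y))

lemma quadform_le {α : Type*} [Fintype α] (M : Matrix α α ℝ) (x : α → ℝ) :
    (M *ᵥ x) ⬝ᵥ x ≤ (∑ i, ∑ j, |M i j|) * (x ⬝ᵥ x) := by
  classical
  have hterm : ∀ i j : α, M i j * x j * x i ≤ |M i j| * (x ⬝ᵥ x) := by
    intro i j
    have h1 : M i j * x j * x i ≤ |M i j| * |x j * x i| := by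
      calc M i j * x j * x i ≤ |M i j * x j * x i| := le_abs_self _
        _ = |M i j| * |x j * x i| := by rw [mul_assoc, abs_mul]
    have h2 : |x j * x i| ≤ x ⬝ᵥ x := by
      rw [abs_mul]
      have hij : |x j| * |x i| ≤ (x j ^ 2 + x i ^ 2) / 2 := by
        nlinarith [sq_nonneg (|x j| - |x i|), sq_abs (x j), sq_abs (x i)]
      have hsum : x j ^ 2 + x i ^ 2 ≤ 2 * (x ⬝ᵥ x) := by
        by_cases hji : j = i
        · subst hji
          have : x j ^ 2 ≤ x ⬝ᵥ x := by
            have := Finset.single_le_sum (f := fun l => x l * x l)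
              (fun l _ => mul_self_nonneg (x l)) (Finset.mem_univ j)
            simpa [dotProduct, sq] using this
          linarith
        · have : x j * x j + x i * x i ≤ x ⬝ᵥ x := by
            have := Finset.sum_le_sum_of_subset_of_nonneg
              (s := {j, i}) (t := Finset.univ) (f := fun l => x l * x l)
              (Finset.subset_univ _) (fun l _ _ => mul_self_nonneg (x l))
            simpa [dotProduct, Finset.sum_pair hji] using this
          nlinarith [this]
      nlinarith [abs_nonneg (x j), abs_nonneg (x i)]
    calc M i j * x j * x i ≤ |M i j| * |x j * x i| := h1
      _ ≤ |M i j| * (x ⬝ᵥ x) := by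
          exact mul_le_mul_of_nonneg_left h2 (abs_nonneg _)
  calc (M *ᵥ x) ⬝ᵥ x = ∑ i, ∑ j, M i j * x j * x i := by
        simp [dotProduct, Matrix.mulVec, Finset.sum_mul]
    _ ≤ ∑ i, ∑ j, |M i j| * (x ⬝ᵥ x) := by
        exact Finset.sum_le_sum (fun i _ => Finset.sum_le_sum (fun j _ => hterm i j))
    _ = (∑ i, ∑ j, |M i j|) * (x ⬝ᵥ x) := by rw [Finset.sum_mul]; congr 1; ext i; rw [Finset.sum_mul]

lemma posdef_lower {k : ℕ} {A : Matrix (Fin k) (Fin k) ℝ} (hA : A.PosDef) :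
    ∃ c > 0, ∀ x, c * (x ⬝ᵥ x) ≤ (A *ᵥ x) ⬝ᵥ x := by
  have hsym : Aᵀ = A := by simpa using hA.1.eq
  have hpsd : ∀ z, 0 ≤ (A *ᵥ z) ⬝ᵥ z := by
    intro z
    rcases eq_or_ne z 0 with rfl | hz
    · simp
    · have := hA.dotProduct_mulVec_pos hz
      have h2 : star z = z := by simp
      rw [h2] at this
      rw [dotProduct_comm] at this
      exact le_of_lt this
  have hinv : A * A⁻¹ = 1 := Matrix.mul_nonsing_inv A hA.det_pos.ne'.isUnit
  set C := ∑ i, ∑ j, |A⁻¹ i j| with hC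
  have hC0 : 0 ≤ C := Finset.sum_nonneg (fun i _ => Finset.sum_nonneg (fun j _ => abs_nonneg _))
  refine ⟨1 / (C + 1), by positivity, fun x => ?_⟩
  have key : x ⬝ᵥ x ≤ (C + 1) * ((A *ᵥ x) ⬝ᵥ x) := by
    rcases eq_or_ne x 0 with rfl | hx
    · simp
    · have hcs := cs_psd hsym hpsd x (A⁻¹ *ᵥ x)
      have h1 : (A *ᵥ (A⁻¹ *ᵥ x)) = x := by
        rw [Matrix.mulVec_mulVec, hinv, Matrix.one_mulVec]
      have h2 : (A *ᵥ x) ⬝ᵥ (A⁻¹ *ᵥ x) = x ⬝ᵥ x := by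
        rw [dot_mulVec_symm, hsym, Matrix.mulVec_mulVec, hinv, Matrix.one_mulVec]
      rw [h1, h2] at hcs
      -- hcs : (x ⬝ᵥ x)^2 ≤ ((A*ᵥx)⬝ᵥx) * (x ⬝ᵥ (A⁻¹ *ᵥ x))
      have h3 : x ⬝ᵥ (A⁻¹ *ᵥ x) ≤ C * (x ⬝ᵥ x) := by
        rw [dotProduct_comm]
        exact quadform_le A⁻¹ x
      have hxx : 0 < x ⬝ᵥ x := by
        have : (0:ℝ) < ∑ i, x i * x i := by
          have hne : ∃ i, x i ≠ 0 := by
            by_contra hcon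
            push_neg at hcon
            exact hx (funext hcon)
          rcases hne with ⟨i0, hi0⟩
          have hpos : (0:ℝ) < x i0 * x i0 := mul_self_pos.mpr hi0
          have hle := Finset.single_le_sum (f := fun l => x l * x l)
            (fun l _ => mul_self_nonneg (x l)) (Finset.mem_univ i0)
          linarith
        simpa [dotProduct] using this
      nlinarith [hpsd x, hcs, h3, hxx, hC0]
  have hApos := hpsd x
  rw [div_mul_eq_mul_div, div_le_iff₀ (by positivity)]
  nlinarith [key, hApos]

lemma twobytwo (p q b x y : ℝ) :
    p*x^2 + 2*b*x*y + q*y^2 ≤ ((p + q + Real.sqrt ((p-q)^2 + 4*b^2))/2) * (x^2 + y^2) := by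
  set s := Real.sqrt ((p-q)^2+4*b^2) with hs
  have hs0 : 0 ≤ s := Real.sqrt_nonneg _
  have hs2 : s^2 = (p-q)^2+4*b^2 := Real.sq_sqrt (by positivity)
  have hpq : |p - q| ≤ s := by
    rw [hs, ← Real.sqrt_sq_eq_abs]
    exact Real.sqrt_le_sqrt (by nlinarith)
  obtain ⟨hpq1, hpq2⟩ := abs_le.mp hpq
  set lam := (p+q+s)/2 with hlam
  have hlp : 0 ≤ lam - p := by rw [hlam]; linarith
  have hlq : 0 ≤ lam - q := by rw [hlam]; linarith
  have hprod : (lam - p)*(lam - q) = b^2 := by rw [hlam]; field_simp; nlinarith [hs2]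
  set a1 := Real.sqrt (lam - p) with ha1
  set a2 := Real.sqrt (lam - q) with ha2
  have h1 : a1^2 = lam - p := Real.sq_sqrt hlp
  have h2 : a2^2 = lam - q := Real.sq_sqrt hlq
  have h3 : (a1*a2)^2 = b^2 := by rw [mul_pow, h1, h2, hprod]
  have ha12 : 0 ≤ a1 * a2 := mul_nonneg (Real.sqrt_nonneg _) (Real.sqrt_nonneg _)
  have habs : |b| = a1 * a2 := by
    rw [← Real.sqrt_sq_eq_abs, h3.symm, Real.sqrt_sq ha12]
  have hb1 : b ≤ a1 * a2 := by rw [← habs]; exact le_abs_self b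
  have hb2 : -(a1 * a2) ≤ b := by rw [← habs]; exact neg_abs_le b
  have key : 0 ≤ (lam - p)*x^2 - 2*b*(x*y) + (lam - q)*y^2 := by
    rcases le_total 0 (x*y) with hxy | hxy
    · have hbb : 2*b*(x*y) ≤ 2*(a1*a2)*(x*y) := by nlinarith
      nlinarith [sq_nonneg (a1*x - a2*y), h1, h2]
    · have hbb : 2*b*(x*y) ≤ 2*(-(a1*a2))*(x*y) := by nlinarith
      nlinarith [sq_nonneg (a1*x + a2*y), h1, h2]
  nlinarith [key]

lemma aNorm_pos {k : ℕ} {A : Matrix (Fin k) (Fin k) ℝ} (hA : A.PosDef)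
    {x : Fin k → ℝ} (hx : x ≠ 0) : 0 < aNorm A x := by
  have h := hA.dotProduct_mulVec_pos hx
  have h2 : (0:ℝ) < (A *ᵥ x) ⬝ᵥ x := by
    have hsx : star x = x := by simp
    rw [hsx, dotProduct_comm] at h
    exact h
  exact Real.sqrt_pos.mpr h2

lemma aNorm_le_aOpNorm {k : ℕ} {A : Matrix (Fin k) (Fin k) ℝ} (hA : A.PosDef)
    (M : Matrix (Fin k) (Fin k) ℝ) (x : Fin k → ℝ) :
    aNorm A (M *ᵥ x) ≤ aOpNorm A M * aNorm A x := by
  classical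
  have hsym : Aᵀ = A := by simpa using hA.1.eq
  have hpsd : ∀ z, 0 ≤ (A *ᵥ z) ⬝ᵥ z := fun z => by
    rcases eq_or_ne z 0 with rfl | hz
    · simp
    · exact le_of_lt (by have := aNorm_pos hA hz; exact Real.sqrt_pos.mp this)
  rcases eq_or_ne x 0 with rfl | hx
  · simp [aNorm]
  -- bounded above
  obtain ⟨c, hc, hlow⟩ := posdef_lower hA
  set K1 := ∑ i, ∑ j, |A i j| with hK1
  set K2 := ∑ i, ∑ j, |(Mᵀ * M) i j| with hK2
  have hK10 : 0 ≤ K1 := Finset.sum_nonneg fun i _ => Finset.sum_nonneg fun j _ => abs_nonneg _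
  have hK20 : 0 ≤ K2 := Finset.sum_nonneg fun i _ => Finset.sum_nonneg fun j _ => abs_nonneg _
  have hbdd : BddAbove { t : ℝ | ∃ z : Fin k → ℝ, z ≠ 0 ∧ t = aNorm A (M *ᵥ z) / aNorm A z } := by
    refine ⟨Real.sqrt (K1 * K2 / c), ?_⟩
    rintro t ⟨z, hz, rfl⟩
    have hAz : 0 < (A *ᵥ z) ⬝ᵥ z := Real.sqrt_pos.mp (aNorm_pos hA hz)
    have hnum : (A *ᵥ (M *ᵥ z)) ⬝ᵥ (M *ᵥ z) ≤ K1 * K2 / c * ((A *ᵥ z) ⬝ᵥ z) := by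
      have e1 : (A *ᵥ (M *ᵥ z)) ⬝ᵥ (M *ᵥ z) ≤ K1 * ((M *ᵥ z) ⬝ᵥ (M *ᵥ z)) := quadform_le A _
      have e2 : (M *ᵥ z) ⬝ᵥ (M *ᵥ z) = ((Mᵀ * M) *ᵥ z) ⬝ᵥ z := by
        rw [dot_mulVec_symm, ← Matrix.mulVec_mulVec, dotProduct_comm]
      have e3 : ((Mᵀ * M) *ᵥ z) ⬝ᵥ z ≤ K2 * (z ⬝ᵥ z) := quadform_le _ _
      have s2 : (M *ᵥ z) ⬝ᵥ (M *ᵥ z) ≤ K2 * (z ⬝ᵥ z) := e2 ▸ e3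
      have s1 : c * ((A *ᵥ (M *ᵥ z)) ⬝ᵥ (M *ᵥ z)) ≤ c * (K1 * ((M *ᵥ z) ⬝ᵥ (M *ᵥ z))) :=
        mul_le_mul_of_nonneg_left e1 hc.le
      have s3 : K1 * ((M *ᵥ z) ⬝ᵥ (M *ᵥ z)) ≤ K1 * (K2 * (z ⬝ᵥ z)) :=
        mul_le_mul_of_nonneg_left s2 hK10
      have s3' : c * (K1 * ((M *ᵥ z) ⬝ᵥ (M *ᵥ z))) ≤ c * (K1 * (K2 * (z ⬝ᵥ z))) :=
        mul_le_mul_of_nonneg_left s3 hc.le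
      have s4 : c * (K1 * (K2 * (z ⬝ᵥ z))) = (K1 * K2) * (c * (z ⬝ᵥ z)) := by ring
      have s5 : (K1 * K2) * (c * (z ⬝ᵥ z)) ≤ (K1 * K2) * ((A *ᵥ z) ⬝ᵥ z) :=
        mul_le_mul_of_nonneg_left (hlow z) (mul_nonneg hK10 hK20)
      have hnum' : c * ((A *ᵥ (M *ᵥ z)) ⬝ᵥ (M *ᵥ z)) ≤ K1 * K2 * ((A *ᵥ z) ⬝ᵥ z) := by
        linarith
      rw [div_mul_eq_mul_div, le_div_iff₀ hc]
      linarith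
    have ht : aNorm A (M *ᵥ z) / aNorm A z ≤ Real.sqrt (K1 * K2 / c) := by
      rw [div_le_iff₀ (aNorm_pos hA hz)]
      have : aNorm A (M *ᵥ z) ≤ Real.sqrt (K1 * K2 / c * ((A *ᵥ z) ⬝ᵥ z)) :=
        Real.sqrt_le_sqrt hnum
      rw [Real.sqrt_mul (by positivity) ((A *ᵥ z) ⬝ᵥ z)] at this
      exact this
    exact ht
  have hmem : aNorm A (M *ᵥ x) / aNorm A x
      ∈ { t : ℝ | ∃ z : Fin k → ℝ, z ≠ 0 ∧ t = aNorm A (M *ᵥ z) / aNorm A z } := ⟨x, hx, rfl⟩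
  have hle := le_csSup hbdd hmem
  have hax : 0 < aNorm A x := aNorm_pos hA hx
  rw [aOpNorm]
  calc aNorm A (M *ᵥ x) = aNorm A (M *ᵥ x) / aNorm A x * aNorm A x := by field_simp
    _ ≤ _ := mul_le_mul_of_nonneg_right hle (le_of_lt hax) |>.trans (le_of_eq rfl)

lemma aOpNorm_nonneg_of {k : ℕ} {A M : Matrix (Fin k) (Fin k) ℝ} (hA : A.PosDef)
    {x : Fin k → ℝ} (hx : x ≠ 0) : 0 ≤ aOpNorm A M := by
  have h := aNorm_le_aOpNorm hA M x
  have hax : 0 < aNorm A x := aNorm_pos hA hx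
  nlinarith [aNorm_nonneg (A := A) (M *ᵥ x), h]

lemma sum_dotProduct' {ι α : Type*} [Fintype ι] [Fintype α]
    (f : ι → α → ℝ) (w : α → ℝ) :
    (∑ i, f i) ⬝ᵥ w = ∑ i, f i ⬝ᵥ w := by
  classical
  induction (Finset.univ : Finset ι) using Finset.induction with
  | empty => simp
  | insert _ _ h ih => simp [Finset.sum_insert h, add_dotProduct, ih]

lemma dot_symm {α : Type*} [Fintype α] {M : Matrix α α ℝ} (hsym : Mᵀ = M) (x z : α → ℝ) :
    (M *ᵥ x) ⬝ᵥ z = (M *ᵥ z) ⬝ᵥ x := by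
  rw [dot_mulVec_symm, hsym, dotProduct_comm]

lemma quad_expand {α : Type*} [Fintype α] {M : Matrix α α ℝ} (hsym : Mᵀ = M)
    (x z : α → ℝ) (t : ℝ) :
    (M *ᵥ (x + t • z)) ⬝ᵥ (x + t • z)
      = ((M *ᵥ z) ⬝ᵥ z) * t^2 + 2*((M *ᵥ x) ⬝ᵥ z)*t + (M *ᵥ x) ⬝ᵥ x := by
  have hzx : (M *ᵥ z) ⬝ᵥ x = (M *ᵥ x) ⬝ᵥ z := dot_symm hsym z x
  rw [Matrix.mulVec_add, Matrix.mulVec_smul]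
  simp [add_dotProduct, smul_dotProduct, dotProduct_add,
    dotProduct_smul, smul_eq_mul, hzx]
  ring

lemma mulVec_sumv {ι α β : Type*} [Fintype ι] [Fintype β] (M : Matrix α β ℝ)
    (f : ι → β → ℝ) : M *ᵥ (∑ i, f i) = ∑ i, M *ᵥ (f i) := by
  classical
  induction (Finset.univ : Finset ι) using Finset.induction with
  | empty => simp
  | insert _ _ h ih => simp [Finset.sum_insert h, Matrix.mulVec_add, ih]

end Helpers

set_option maxHeartbeats 1000000 in
/-- Spectral estimate for the GenEO-2 preconditioner with inexact coarse
solve: under partition of unity, the `k₀`-bound, spectral equivalence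
`μ′ ⟨Ẽ u, u⟩ ≤ ⟨E u, u⟩ ≤ μ ⟨Ẽ u, u⟩`, local SPD matrices `B_i`, subspaces `V_i` with
`R_iᵀ D_i (V_i) ⊆ V₀`, `W_i` the `B_i`-orthogonal complement of `V_i` (described by the
predicate `∀ w ∈ V_i, ⟨B_i v, w⟩ = 0`), `ξ_i` the `B_i`-orthogonal projection onto `V_i`,
`q_i` the Euclidean orthogonal projection onto `W_i`, `B_i† := (I − ξ_i) B_i⁻¹`, the
`γ`-bound on `W_i`, and projections `p_j` with `range(R_jᵀ D_j p_j) ⊆ V₀`,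
`range(I − p_j) ⊆ W_j` and the `(k₁/τ)`-bound, every eigenvalue `λ` of `M⁻¹ A`, where
`M⁻¹ := Z Ẽ⁻¹ Zᵀ + (I − P̃₀)(∑ R_iᵀ D_i q_i B_i† q_i D_i R_i)(I − P̃₀ᵀ)`, satisfies
`c_T ≤ λ ≤ c_R`. -/
theorem stmt17 {n m N : ℕ} (A : Matrix (Fin n) (Fin n) ℝ) (hA : A.PosDef)
    (Z : Matrix (Fin n) (Fin m) ℝ) (hZ : LinearIndependent ℝ Zᵀ)
    (Et : Matrix (Fin m) (Fin m) ℝ) (hEt : Et.PosDef)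
    (nd : Fin N → ℕ)
    (R : ∀ i : Fin N, Matrix (Fin (nd i)) (Fin n) ℝ)
    (D : ∀ i : Fin N, Matrix (Fin (nd i)) (Fin (nd i)) ℝ)
    (hD : ∀ i, (D i).IsDiag)
    (k₀ k₁ τ γ μ μ' : ℝ) (hk₀ : 0 < k₀) (hk₁ : 0 < k₁) (hτ : 0 < τ) (hγ : 0 < γ)
    (hμ : 0 < μ) (hμ' : 0 < μ')
    (hPOU : ∑ i, (R i)ᵀ * D i * R i = (1 : Matrix (Fin n) (Fin n) ℝ))
    (hk₀bound : ∀ V : ∀ i : Fin N, Fin (nd i) → ℝ,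
      (A *ᵥ (∑ i, (R i)ᵀ *ᵥ V i)) ⬝ᵥ (∑ i, (R i)ᵀ *ᵥ V i)
        ≤ k₀ * ∑ i, (A *ᵥ ((R i)ᵀ *ᵥ V i)) ⬝ᵥ ((R i)ᵀ *ᵥ V i))
    (hEμ : ∀ u : Fin m → ℝ,
      μ' * ((Et *ᵥ u) ⬝ᵥ u) ≤ ((Zᵀ * A * Z) *ᵥ u) ⬝ᵥ u
        ∧ ((Zᵀ * A * Z) *ᵥ u) ⬝ᵥ u ≤ μ * ((Et *ᵥ u) ⬝ᵥ u))
    (B : ∀ i : Fin N, Matrix (Fin (nd i)) (Fin (nd i)) ℝ)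
    (hB : ∀ i, (B i).PosDef)
    (Vs : ∀ i : Fin N, Submodule ℝ (Fin (nd i) → ℝ))
    (hVsV₀ : ∀ i, ∀ v ∈ Vs i,
      (R i)ᵀ *ᵥ ((D i) *ᵥ v) ∈ Set.range (fun β : Fin m → ℝ => Z *ᵥ β))
    (ξ : ∀ i : Fin N, Matrix (Fin (nd i)) (Fin (nd i)) ℝ)
    (hξmem : ∀ i (u : Fin (nd i) → ℝ), (ξ i) *ᵥ u ∈ Vs i)
    (hξid : ∀ i, ∀ v ∈ Vs i, (ξ i) *ᵥ v = v)
    (hξorth : ∀ i (u : Fin (nd i) → ℝ), ∀ v ∈ Vs i,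
      ((B i) *ᵥ (u - (ξ i) *ᵥ u)) ⬝ᵥ v = 0)
    (q : ∀ i : Fin N, Matrix (Fin (nd i)) (Fin (nd i)) ℝ)
    (hqmem : ∀ i (u : Fin (nd i) → ℝ), ∀ w ∈ Vs i, ((B i) *ᵥ ((q i) *ᵥ u)) ⬝ᵥ w = 0)
    (hqid : ∀ i (v : Fin (nd i) → ℝ),
      (∀ w ∈ Vs i, ((B i) *ᵥ v) ⬝ᵥ w = 0) → (q i) *ᵥ v = v)
    (hqorth : ∀ i (u v : Fin (nd i) → ℝ),
      (∀ w ∈ Vs i, ((B i) *ᵥ v) ⬝ᵥ w = 0) → (u - (q i) *ᵥ u) ⬝ᵥ v = 0)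
    (hγbound : ∀ i (v : Fin (nd i) → ℝ), (∀ w ∈ Vs i, ((B i) *ᵥ v) ⬝ᵥ w = 0) →
      (A *ᵥ ((R i)ᵀ *ᵥ ((D i) *ᵥ v))) ⬝ᵥ ((R i)ᵀ *ᵥ ((D i) *ᵥ v))
        ≤ γ * (((B i) *ᵥ v) ⬝ᵥ v))
    (p : ∀ j : Fin N, Matrix (Fin (nd j)) (Fin (nd j)) ℝ)
    (hpV₀ : ∀ j (v : Fin (nd j) → ℝ),
      ((R j)ᵀ * D j * p j) *ᵥ v ∈ Set.range (fun β : Fin m → ℝ => Z *ᵥ β))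
    (hpW : ∀ j (v : Fin (nd j) → ℝ), ∀ w ∈ Vs j,
      ((B j) *ᵥ ((1 - p j) *ᵥ v)) ⬝ᵥ w = 0)
    (hGenEO2 : ∀ U : Fin n → ℝ,
      ∑ j, ((B j) *ᵥ ((1 - p j) *ᵥ ((R j) *ᵥ U))) ⬝ᵥ ((1 - p j) *ᵥ ((R j) *ᵥ U))
        ≤ (k₁ / τ) * ((A *ᵥ U) ⬝ᵥ U))
    (εA cT cR : ℝ)
    (hεA : εA = aOpNorm A (Z * (Zᵀ * A * Z)⁻¹ * Zᵀ * A - Z * Et⁻¹ * Zᵀ * A))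
    (hcT : cT = 1 / ((1 / μ') * (1 + εA * Real.sqrt (k₀ * k₁ * γ / τ)) ^ 2 + k₁ / τ))
    (hcR : cR = (k₀ * γ * (1 + εA ^ 2) + μ
        + Real.sqrt ((k₀ * γ * (1 + εA ^ 2) - μ) ^ 2 + 4 * μ * k₀ * γ * εA ^ 2)) / 2) :
    ∀ (lam : ℝ) (U : Fin n → ℝ), U ≠ 0 →
      ((Z * Et⁻¹ * Zᵀ
          + (1 - Z * Et⁻¹ * Zᵀ * A) *
            (∑ i, (R i)ᵀ * D i * q i * ((1 - ξ i) * (B i)⁻¹) * q i * D i * R i) *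
            (1 - (Z * Et⁻¹ * Zᵀ * A)ᵀ)) * A) *ᵥ U = lam • U →
      cT ≤ lam ∧ lam ≤ cR := by
  classical
  intro lam U hU hEig
  -- abbreviations
  set Ptm : Matrix (Fin n) (Fin n) ℝ := Z * Et⁻¹ * Zᵀ * A with hPtm
  set EE : Matrix (Fin m) (Fin m) ℝ := Zᵀ * A * Z with hEEdef
  set P0m : Matrix (Fin n) (Fin n) ℝ := Z * EE⁻¹ * Zᵀ * A with hP0m
  -- basic facts
  have hAsym : Aᵀ = A := by simpa using hA.1.eq
  have hApsd : ∀ z, 0 ≤ (A *ᵥ z) ⬝ᵥ z := by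
    intro z
    rcases eq_or_ne z 0 with rfl | hz
    · simp
    · exact (Real.sqrt_pos.mp (aNorm_pos hA hz)).le
  have hAdotpos : ∀ z, z ≠ 0 → 0 < (A *ᵥ z) ⬝ᵥ z :=
    fun z hz => Real.sqrt_pos.mp (aNorm_pos hA hz)
  have hEtsym : Etᵀ = Et := by simpa using hEt.1.eq
  have hEtpsd : ∀ u, 0 ≤ (Et *ᵥ u) ⬝ᵥ u := by
    intro u
    rcases eq_or_ne u 0 with rfl | hu
    · simp
    · exact (Real.sqrt_pos.mp (aNorm_pos hEt hu)).le
  have hEtMul : Et * Et⁻¹ = 1 := Matrix.mul_nonsing_inv Et hEt.det_pos.ne'.isUnit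
  have hBsym : ∀ i, (B i)ᵀ = B i := fun i => by simpa using (hB i).1.eq
  have hBpsd : ∀ i, ∀ u, 0 ≤ ((B i) *ᵥ u) ⬝ᵥ u := by
    intro i u
    rcases eq_or_ne u 0 with rfl | hu
    · simp
    · exact (Real.sqrt_pos.mp (aNorm_pos (hB i) hu)).le
  have hBMul : ∀ i, B i * (B i)⁻¹ = 1 :=
    fun i => Matrix.mul_nonsing_inv (B i) (hB i).det_pos.ne'.isUnit
  have hDsym : ∀ i, (D i)ᵀ = D i := by
    intro i
    ext a b
    by_cases hab : a = b
    · subst hab; simp [Matrix.transpose_apply]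
    · rw [Matrix.transpose_apply, hD i (Ne.symm hab), hD i hab]
  have hZinj : ∀ u : Fin m → ℝ, Z *ᵥ u = 0 → u = 0 := by
    intro u hu
    have hrewr : ∑ j, u j • Zᵀ j = Z *ᵥ u := by
      ext i
      simp [Matrix.mulVec, dotProduct, Finset.sum_apply, Matrix.transpose_apply,
        mul_comm]
    have := Fintype.linearIndependent_iff.mp hZ u (by rw [hrewr, hu])
    exact funext this
  have hEEherm : EEᵀ = EE := by
    rw [hEEdef, Matrix.transpose_mul, Matrix.transpose_mul, Matrix.transpose_transpose,
      hAsym, Matrix.mul_assoc]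
  have hEEpos : EE.PosDef := by
    apply Matrix.PosDef.of_dotProduct_mulVec_pos
    · show EEᴴ = EE
      simpa [Matrix.conjTranspose_eq_transpose_of_trivial] using hEEherm
    · intro u hu
      have hZu : Z *ᵥ u ≠ 0 := fun h => hu (hZinj u h)
      have hval : u ⬝ᵥ (EE *ᵥ u) = (A *ᵥ (Z *ᵥ u)) ⬝ᵥ (Z *ᵥ u) := by
        rw [hEEdef, ← Matrix.mulVec_mulVec, ← Matrix.mulVec_mulVec,
          ← dot_mulVec_symm Z u, dotProduct_comm]
      have hpos := hAdotpos (Z *ᵥ u) hZu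
      have hstar : star u = u := by simp
      rw [hstar, hval]
      exact hpos
  have hEEMul : EE * EE⁻¹ = 1 := Matrix.mul_nonsing_inv EE hEEpos.det_pos.ne'.isUnit
  have hEEMul' : EE⁻¹ * EE = 1 := Matrix.nonsing_inv_mul EE hEEpos.det_pos.ne'.isUnit
  have hQuadAdd : ∀ x z : Fin n → ℝ, (A *ᵥ (x + z)) ⬝ᵥ (x + z)
      = (A *ᵥ x) ⬝ᵥ x + 2 * ((A *ᵥ x) ⬝ᵥ z) + (A *ᵥ z) ⬝ᵥ z := by
    intro x z
    have hzx : (A *ᵥ z) ⬝ᵥ x = (A *ᵥ x) ⬝ᵥ z := by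
      rw [dot_mulVec_symm, hAsym, dotProduct_comm]
    rw [Matrix.mulVec_add]
    simp [add_dotProduct, dotProduct_add, hzx]
    ring
  have hP0range : ∀ x : Fin n → ℝ, P0m *ᵥ x = Z *ᵥ (EE⁻¹ *ᵥ (Zᵀ *ᵥ (A *ᵥ x))) := by
    intro x; rw [hP0m]; simp only [← Matrix.mulVec_mulVec]
  have hPtrange : ∀ x : Fin n → ℝ, Ptm *ᵥ x = Z *ᵥ (Et⁻¹ *ᵥ (Zᵀ *ᵥ (A *ᵥ x))) := by
    intro x; rw [hPtm]; simp only [← Matrix.mulVec_mulVec]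
  have hZAZ : ∀ w : Fin m → ℝ, Zᵀ *ᵥ (A *ᵥ (Z *ᵥ w)) = EE *ᵥ w := by
    intro w
    rw [Matrix.mulVec_mulVec, Matrix.mulVec_mulVec, hEEdef]
  have hP0Z : ∀ w : Fin m → ℝ, P0m *ᵥ (Z *ᵥ w) = Z *ᵥ w := by
    intro w
    rw [hP0range, hZAZ, Matrix.mulVec_mulVec w EE⁻¹ EE, hEEMul', Matrix.one_mulVec]
  have hZnorm : ∀ u₀ : Fin m → ℝ, (A *ᵥ (Z *ᵥ u₀)) ⬝ᵥ (Z *ᵥ u₀) = (EE *ᵥ u₀) ⬝ᵥ u₀ := by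
    intro u₀
    rw [dotProduct_comm, dot_mulVec_symm Z, hZAZ, dotProduct_comm]
  -- A-orthogonality of range Z and (1 - P0m)
  have horth : ∀ (x : Fin n → ℝ) (w : Fin m → ℝ),
      (A *ᵥ (x - P0m *ᵥ x)) ⬝ᵥ (Z *ᵥ w) = 0 := by
    intro x w
    have h1 : (A *ᵥ (x - P0m *ᵥ x)) ⬝ᵥ (Z *ᵥ w)
        = w ⬝ᵥ (Zᵀ *ᵥ (A *ᵥ (x - P0m *ᵥ x))) := by
      rw [dotProduct_comm, dot_mulVec_symm]
    have h2 : Zᵀ *ᵥ (A *ᵥ (x - P0m *ᵥ x)) = 0 := by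
      rw [Matrix.mulVec_sub, Matrix.mulVec_sub, hP0range, hZAZ,
        Matrix.mulVec_mulVec _ EE EE⁻¹, hEEMul, Matrix.one_mulVec, sub_self]
    rw [h1, h2, dotProduct_zero]
  have hcross0 : ∀ x : Fin n → ℝ, (A *ᵥ (P0m *ᵥ x)) ⬝ᵥ (x - P0m *ᵥ x) = 0 := by
    intro x
    have hz := horth x (EE⁻¹ *ᵥ (Zᵀ *ᵥ (A *ᵥ x)))
    rw [← hP0range] at hz
    have hflip : (A *ᵥ (P0m *ᵥ x)) ⬝ᵥ (x - P0m *ᵥ x)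
        = (A *ᵥ (x - P0m *ᵥ x)) ⬝ᵥ (P0m *ᵥ x) := by
      rw [dot_mulVec_symm, hAsym, dotProduct_comm]
    rw [hflip, hz]
  have hpyth : ∀ x : Fin n → ℝ, (A *ᵥ x) ⬝ᵥ x
      = (A *ᵥ (P0m *ᵥ x)) ⬝ᵥ (P0m *ᵥ x) + (A *ᵥ (x - P0m *ᵥ x)) ⬝ᵥ (x - P0m *ᵥ x) := by
    intro x
    have hsplit : x = P0m *ᵥ x + (x - P0m *ᵥ x) := by abel
    calc (A *ᵥ x) ⬝ᵥ x
        = (A *ᵥ (P0m *ᵥ x + (x - P0m *ᵥ x))) ⬝ᵥ (P0m *ᵥ x + (x - P0m *ᵥ x)) := by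
          rw [← hsplit]
      _ = _ := by rw [hQuadAdd, hcross0]; ring
  have hP0contr : ∀ x : Fin n → ℝ, aNorm A (P0m *ᵥ x) ≤ aNorm A x := by
    intro x
    have h : (A *ᵥ (P0m *ᵥ x)) ⬝ᵥ (P0m *ᵥ x) ≤ (A *ᵥ x) ⬝ᵥ x := by
      rw [hpyth x]; linarith [hApsd (x - P0m *ᵥ x)]
    exact Real.sqrt_le_sqrt h
  have hP0contr' : ∀ x : Fin n → ℝ, aNorm A (x - P0m *ᵥ x) ≤ aNorm A x := by
    intro x
    have h : (A *ᵥ (x - P0m *ᵥ x)) ⬝ᵥ (x - P0m *ᵥ x) ≤ (A *ᵥ x) ⬝ᵥ x := by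
      rw [hpyth x]; linarith [hApsd (P0m *ᵥ x)]
    exact Real.sqrt_le_sqrt h
  -- epsilon facts
  have hεA0 : 0 ≤ εA := by
    rw [hεA]; exact aOpNorm_nonneg_of hA hU
  have hεAbound : ∀ x : Fin n → ℝ, aNorm A ((P0m - Ptm) *ᵥ x) ≤ εA * aNorm A x := by
    intro x; rw [hεA]; exact aNorm_le_aOpNorm hA _ x
  -- the data
  set y : Fin n → ℝ := A *ᵥ U with hy
  set ustar : Fin m → ℝ := Et⁻¹ *ᵥ (Zᵀ *ᵥ y) with hustar
  set yv : ∀ i, Fin (nd i) → ℝ := fun i => D i *ᵥ (R i *ᵥ ((1 - Ptmᵀ) *ᵥ y)) with hyv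
  set g : ∀ i, Fin (nd i) → ℝ := fun i => q i *ᵥ yv i with hg
  set vstar : ∀ i, Fin (nd i) → ℝ :=
    fun i => (1 - ξ i) *ᵥ ((B i)⁻¹ *ᵥ g i) with hvstar
  have hsub1 : ∀ (i : Fin N) (u : Fin (nd i) → ℝ), (1 - ξ i) *ᵥ u = u - ξ i *ᵥ u := by
    intro i u; rw [Matrix.sub_mulVec, Matrix.one_mulVec]
  set sstar : Fin n → ℝ := ∑ i, (R i)ᵀ *ᵥ (D i *ᵥ vstar i) with hsstar
  have hvstar' : ∀ i, vstar i = (B i)⁻¹ *ᵥ g i - ξ i *ᵥ ((B i)⁻¹ *ᵥ g i) := by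
    intro i; rw [hvstar]; exact hsub1 i _
  have hWstar : ∀ i, ∀ w ∈ Vs i, ((B i) *ᵥ vstar i) ⬝ᵥ w = 0 := by
    intro i w hw
    rw [hvstar' i]
    exact hξorth i ((B i)⁻¹ *ᵥ g i) w hw
  have hBvdot : ∀ i (x : Fin (nd i) → ℝ), (∀ w ∈ Vs i, ((B i) *ᵥ x) ⬝ᵥ w = 0) →
      ((B i) *ᵥ vstar i) ⬝ᵥ x = g i ⬝ᵥ x := by
    intro i x hx
    have hBv : (B i) *ᵥ vstar i = g i - (B i) *ᵥ (ξ i *ᵥ ((B i)⁻¹ *ᵥ g i)) := by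
      rw [hvstar' i, Matrix.mulVec_sub, Matrix.mulVec_mulVec (g i) (B i) (B i)⁻¹,
        hBMul i, Matrix.one_mulVec]
    have hzero : ((B i) *ᵥ (ξ i *ᵥ ((B i)⁻¹ *ᵥ g i))) ⬝ᵥ x = 0 := by
      rw [dot_mulVec_symm, hBsym i, dotProduct_comm]
      exact hx _ (hξmem i _)
    rw [hBv, sub_dotProduct, hzero, sub_zero]
  have hyvdot : ∀ i (x : Fin (nd i) → ℝ), (∀ w ∈ Vs i, ((B i) *ᵥ x) ⬝ᵥ w = 0) →
      yv i ⬝ᵥ x = g i ⬝ᵥ x := by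
    intro i x hx
    have h := hqorth i (yv i) x hx
    rw [sub_dotProduct, sub_eq_zero] at h
    exact h
  -- eigen equation in vector form
  have hqraw : ∀ i, q i *ᵥ ((1 - ξ i) *ᵥ ((B i)⁻¹ *ᵥ (q i *ᵥ (D i *ᵥ (R i *ᵥ ((1 - Ptmᵀ) *ᵥ (A *ᵥ U)))))))
      = (1 - ξ i) *ᵥ ((B i)⁻¹ *ᵥ (q i *ᵥ (D i *ᵥ (R i *ᵥ ((1 - Ptmᵀ) *ᵥ (A *ᵥ U)))))) :=
    fun i => hqid i _ (hWstar i)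
  have hkey : ((Z * Et⁻¹ * Zᵀ
      + (1 - Ptm) *
        (∑ i, (R i)ᵀ * D i * q i * ((1 - ξ i) * (B i)⁻¹) * q i * D i * R i) *
        (1 - Ptmᵀ)) * A) *ᵥ U = Z *ᵥ ustar + (1 - Ptm) *ᵥ sstar := by
    simp only [← Matrix.mulVec_mulVec, Matrix.add_mulVec, sum_mulVec']
    rw [hustar, hsstar]
    simp only [hvstar, hg, hyv, hy, hqraw]
  have hCy : Z *ᵥ ustar + (1 - Ptm) *ᵥ sstar = lam • U := by
    rw [← hkey]; exact hEig
  have hEtustar : Et *ᵥ ustar = Zᵀ *ᵥ y := by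
    rw [hustar, Matrix.mulVec_mulVec (Zᵀ *ᵥ y) Et Et⁻¹, hEtMul, Matrix.one_mulVec]
  -- common duality computation
  have hpair : ∀ (u₀ : Fin m → ℝ) (v : ∀ i, Fin (nd i) → ℝ),
      (∀ i, ∀ w ∈ Vs i, ((B i) *ᵥ v i) ⬝ᵥ w = 0) →
      (Z *ᵥ u₀ + (1 - Ptm) *ᵥ (∑ i, (R i)ᵀ *ᵥ (D i *ᵥ v i))) ⬝ᵥ y
        = (Et *ᵥ ustar) ⬝ᵥ u₀ + ∑ i, ((B i) *ᵥ vstar i) ⬝ᵥ v i := by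
    intro u₀ v hv
    rw [add_dotProduct]
    have part1 : (Z *ᵥ u₀) ⬝ᵥ y = (Et *ᵥ ustar) ⬝ᵥ u₀ := by
      rw [dot_mulVec_symm Z u₀ y, ← hEtustar, dotProduct_comm]
    have part2 : ((1 - Ptm) *ᵥ (∑ i, (R i)ᵀ *ᵥ (D i *ᵥ v i))) ⬝ᵥ y
        = ∑ i, ((B i) *ᵥ vstar i) ⬝ᵥ v i := by
      have htr : (1 - Ptm)ᵀ = 1 - Ptmᵀ := by
        rw [Matrix.transpose_sub, Matrix.transpose_one]
      have hflip : ((1 - Ptm) *ᵥ (∑ i, (R i)ᵀ *ᵥ (D i *ᵥ v i))) ⬝ᵥ y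
          = (∑ i, (R i)ᵀ *ᵥ (D i *ᵥ v i)) ⬝ᵥ ((1 - Ptmᵀ) *ᵥ y) := by
        rw [dot_mulVec_symm, htr]
      rw [hflip, sum_dotProduct']
      refine Finset.sum_congr rfl (fun i _ => ?_)
      have step1 : ((R i)ᵀ *ᵥ (D i *ᵥ v i)) ⬝ᵥ ((1 - Ptmᵀ) *ᵥ y)
          = v i ⬝ᵥ yv i := by
        rw [dot_mulVec_symm ((R i)ᵀ), Matrix.transpose_transpose,
          dot_mulVec_symm (D i), hDsym i, hyv]
      rw [step1, dotProduct_comm, hyvdot i (v i) (hv i),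
        ← hBvdot i (v i) (hv i)]
    rw [part1, part2]
  -- Lemma B : quadratic value
  have hLemB : (Z *ᵥ ustar + (1 - Ptm) *ᵥ sstar) ⬝ᵥ y
      = (Et *ᵥ ustar) ⬝ᵥ ustar + ∑ i, ((B i) *ᵥ vstar i) ⬝ᵥ vstar i := by
    have := hpair ustar vstar hWstar
    rw [← hsstar] at this
    exact this
  -- Lemma C : continuity (upper bound)
  have hLemC : ∀ (u₀ : Fin m → ℝ) (v : ∀ i, Fin (nd i) → ℝ),
      (∀ i, ∀ w ∈ Vs i, ((B i) *ᵥ v i) ⬝ᵥ w = 0) →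
      (aNorm A (Z *ᵥ u₀ + (1 - Ptm) *ᵥ (∑ i, (R i)ᵀ *ᵥ (D i *ᵥ v i))))^2
        ≤ cR * ((Et *ᵥ u₀) ⬝ᵥ u₀ + ∑ i, ((B i) *ᵥ v i) ⬝ᵥ v i) := by
    intro u₀ v hv
    set sv : Fin n → ℝ := ∑ i, (R i)ᵀ *ᵥ (D i *ᵥ v i) with hsv
    have he0 : 0 ≤ (Et *ᵥ u₀) ⬝ᵥ u₀ := hEtpsd u₀
    have hβ0 : 0 ≤ ∑ i, ((B i) *ᵥ v i) ⬝ᵥ v i :=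
      Finset.sum_nonneg fun i _ => hBpsd i (v i)
    have hsplit : Z *ᵥ u₀ + (1 - Ptm) *ᵥ sv
        = (Z *ᵥ u₀ + (P0m - Ptm) *ᵥ sv) + (sv - P0m *ᵥ sv) := by
      rw [Matrix.sub_mulVec, Matrix.sub_mulVec, Matrix.one_mulVec]; abel
    obtain ⟨w0, hw0⟩ : ∃ w, Z *ᵥ u₀ + (P0m - Ptm) *ᵥ sv = Z *ᵥ w :=
      ⟨u₀ + (EE⁻¹ *ᵥ (Zᵀ *ᵥ (A *ᵥ sv)) - Et⁻¹ *ᵥ (Zᵀ *ᵥ (A *ᵥ sv))), by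
        rw [Matrix.sub_mulVec, hP0range, hPtrange, ← Matrix.mulVec_sub,
          ← Matrix.mulVec_add]⟩
    have hcross : (A *ᵥ (sv - P0m *ᵥ sv)) ⬝ᵥ (Z *ᵥ w0) = 0 := horth sv w0
    have hpyth2 : (A *ᵥ (Z *ᵥ u₀ + (1 - Ptm) *ᵥ sv)) ⬝ᵥ (Z *ᵥ u₀ + (1 - Ptm) *ᵥ sv)
        = (A *ᵥ (Z *ᵥ w0)) ⬝ᵥ (Z *ᵥ w0)
          + (A *ᵥ (sv - P0m *ᵥ sv)) ⬝ᵥ (sv - P0m *ᵥ sv) := by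
      rw [hsplit, hw0, hQuadAdd]
      have hc : (A *ᵥ (Z *ᵥ w0)) ⬝ᵥ (sv - P0m *ᵥ sv) = 0 := by
        rw [dot_symm hAsym]; exact hcross
      rw [hc]; ring
    have hx0bound : aNorm A (Z *ᵥ w0) ≤ aNorm A (Z *ᵥ u₀) + εA * aNorm A sv := by
      rw [← hw0]
      calc aNorm A (Z *ᵥ u₀ + (P0m - Ptm) *ᵥ sv)
          ≤ aNorm A (Z *ᵥ u₀) + aNorm A ((P0m - Ptm) *ᵥ sv) :=
            aNorm_triangle hAsym hApsd _ _
        _ ≤ _ := by linarith [hεAbound sv]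
    have ha2 : (aNorm A (Z *ᵥ u₀))^2 ≤ μ * ((Et *ᵥ u₀) ⬝ᵥ u₀) := by
      rw [aNorm_sq hApsd, hZnorm u₀]; exact (hEμ u₀).2
    have ht2 : (aNorm A sv)^2 ≤ k₀ * γ * (∑ i, ((B i) *ᵥ v i) ⬝ᵥ v i) := by
      rw [aNorm_sq hApsd]
      have h1 := hk₀bound (fun i => D i *ᵥ v i)
      have h2 : ∑ i, (A *ᵥ ((R i)ᵀ *ᵥ (D i *ᵥ v i))) ⬝ᵥ ((R i)ᵀ *ᵥ (D i *ᵥ v i))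
          ≤ γ * ∑ i, ((B i) *ᵥ v i) ⬝ᵥ v i := by
        rw [Finset.mul_sum]
        exact Finset.sum_le_sum fun i _ => hγbound i (v i) (hv i)
      calc (A *ᵥ sv) ⬝ᵥ sv
          ≤ k₀ * ∑ i, (A *ᵥ ((R i)ᵀ *ᵥ (D i *ᵥ v i))) ⬝ᵥ ((R i)ᵀ *ᵥ (D i *ᵥ v i)) := h1
        _ ≤ k₀ * (γ * ∑ i, ((B i) *ᵥ v i) ⬝ᵥ v i) :=
            mul_le_mul_of_nonneg_left h2 hk₀.le
        _ = k₀ * γ * ∑ i, ((B i) *ᵥ v i) ⬝ᵥ v i := by ring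
    have ha0 : 0 ≤ aNorm A (Z *ᵥ u₀) := aNorm_nonneg _
    have ht0 : 0 ≤ aNorm A sv := aNorm_nonneg _
    have hta : aNorm A (Z *ᵥ u₀) ≤ Real.sqrt (μ * ((Et *ᵥ u₀) ⬝ᵥ u₀)) := by
      rw [← Real.sqrt_sq ha0]; exact Real.sqrt_le_sqrt ha2
    have htb : aNorm A sv ≤ Real.sqrt (k₀ * γ * (∑ i, ((B i) *ᵥ v i) ⬝ᵥ v i)) := by
      rw [← Real.sqrt_sq ht0]; exact Real.sqrt_le_sqrt ht2
    have htot : (aNorm A (Z *ᵥ u₀ + (1 - Ptm) *ᵥ sv))^2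
        = (aNorm A (Z *ᵥ w0))^2 + (aNorm A (sv - P0m *ᵥ sv))^2 := by
      rw [aNorm_sq hApsd, aNorm_sq hApsd, aNorm_sq hApsd, hpyth2]
    have h1' : (aNorm A (Z *ᵥ w0))^2
        ≤ (aNorm A (Z *ᵥ u₀) + εA * aNorm A sv)^2 :=
      pow_le_pow_left₀ (aNorm_nonneg _) hx0bound 2
    have h2' : (aNorm A (sv - P0m *ᵥ sv))^2 ≤ (aNorm A sv)^2 :=
      pow_le_pow_left₀ (aNorm_nonneg _) (hP0contr' sv) 2
    -- 2x2 spectral bound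
    have hb2 : (εA * Real.sqrt (μ * (k₀ * γ)))^2 = μ * k₀ * γ * εA^2 := by
      rw [mul_pow, Real.sq_sqrt (by positivity)]; ring
    have hcRlam : cR = (μ + k₀ * γ * (1 + εA^2)
        + Real.sqrt ((μ - k₀ * γ * (1 + εA^2))^2
            + 4 * (εA * Real.sqrt (μ * (k₀ * γ)))^2)) / 2 := by
      have harg : (μ - k₀ * γ * (1 + εA^2))^2 + 4 * (εA * Real.sqrt (μ * (k₀ * γ)))^2
          = (k₀ * γ * (1 + εA^2) - μ)^2 + 4 * μ * k₀ * γ * εA^2 := by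
        rw [hb2]; ring
      rw [hcR, harg]; ring
    set x1 : ℝ := Real.sqrt ((Et *ᵥ u₀) ⬝ᵥ u₀) with hx1
    set y1 : ℝ := Real.sqrt (∑ i, ((B i) *ᵥ v i) ⬝ᵥ v i) with hy1
    have hx1sq : x1^2 = (Et *ᵥ u₀) ⬝ᵥ u₀ := Real.sq_sqrt he0
    have hy1sq : y1^2 = ∑ i, ((B i) *ᵥ v i) ⬝ᵥ v i := Real.sq_sqrt hβ0
    have hx10 : 0 ≤ x1 := Real.sqrt_nonneg _
    have hy10 : 0 ≤ y1 := Real.sqrt_nonneg _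
    have h2b := twobytwo μ (k₀ * γ * (1 + εA^2)) (εA * Real.sqrt (μ * (k₀ * γ))) x1 y1
    have hsqrtmu : Real.sqrt (μ * ((Et *ᵥ u₀) ⬝ᵥ u₀)) = Real.sqrt μ * x1 := by
      rw [hx1, Real.sqrt_mul hμ.le]
    have hsqrtk : Real.sqrt (k₀ * γ * (∑ i, ((B i) *ᵥ v i) ⬝ᵥ v i))
        = Real.sqrt (k₀ * γ) * y1 := by
      rw [hy1, Real.sqrt_mul (by positivity)]
    have hsqrtsplit : Real.sqrt (μ * (k₀ * γ)) = Real.sqrt μ * Real.sqrt (k₀ * γ) :=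
      Real.sqrt_mul hμ.le _
    have hat : aNorm A (Z *ᵥ u₀) * aNorm A sv
        ≤ (Real.sqrt μ * x1) * (Real.sqrt (k₀ * γ) * y1) := by
      have := mul_le_mul hta htb ht0 (Real.sqrt_nonneg _)
      rw [hsqrtmu, hsqrtk] at this
      exact this
    have hmono1 : εA * (aNorm A (Z *ᵥ u₀) * aNorm A sv)
        ≤ εA * ((Real.sqrt μ * x1) * (Real.sqrt (k₀ * γ) * y1)) :=
      mul_le_mul_of_nonneg_left hat hεA0
    have hmono2 : (1 + εA^2) * (aNorm A sv)^2
        ≤ (1 + εA^2) * (k₀ * γ * (∑ i, ((B i) *ᵥ v i) ⬝ᵥ v i)) :=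
      mul_le_mul_of_nonneg_left ht2 (by positivity)
    have ha2' : (aNorm A (Z *ᵥ u₀))^2 ≤ μ * x1^2 := by rw [hx1sq]; exact ha2
    have hmono2' : (1 + εA^2) * (aNorm A sv)^2 ≤ (1 + εA^2) * (k₀ * γ * y1^2) := by
      rw [hy1sq]; exact hmono2
    have hb_eq : 2*(εA * Real.sqrt (μ * (k₀ * γ)))*x1*y1
        = 2*εA*((Real.sqrt μ * x1) * (Real.sqrt (k₀ * γ) * y1)) := by
      rw [hsqrtsplit]; ring
    have hexp : (aNorm A (Z *ᵥ u₀) + εA * aNorm A sv)^2 + (aNorm A sv)^2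
        = (aNorm A (Z *ᵥ u₀))^2 + 2*εA*(aNorm A (Z *ᵥ u₀) * aNorm A sv)
          + (1 + εA^2)*(aNorm A sv)^2 := by ring
    rw [htot, hcRlam, ← hx1sq, ← hy1sq]
    linarith [h1', h2', ha2', hmono1, hmono2', h2b, hb_eq, hexp, hx1sq, hy1sq]
  -- denominator of cT
  set denomD : ℝ := (1 / μ') * (1 + εA * Real.sqrt (k₀ * k₁ * γ / τ)) ^ 2 + k₁ / τ with hdenomD
  have hdenompos : 0 < denomD := by
    rw [hdenomD]
    have h1 : 0 < k₁ / τ := by positivity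
    have h2 : 0 ≤ (1 / μ') * (1 + εA * Real.sqrt (k₀ * k₁ * γ / τ)) ^ 2 := by positivity
    linarith
  -- Lemma D : stable decomposition
  have hLemD : ∃ (u₀ : Fin m → ℝ) (v : ∀ i, Fin (nd i) → ℝ),
      (∀ i, ∀ w ∈ Vs i, ((B i) *ᵥ v i) ⬝ᵥ w = 0) ∧
      Z *ᵥ u₀ + (1 - Ptm) *ᵥ (∑ i, (R i)ᵀ *ᵥ (D i *ᵥ v i)) = U ∧
      (Et *ᵥ u₀) ⬝ᵥ u₀ + ∑ i, ((B i) *ᵥ v i) ⬝ᵥ v i ≤ denomD * ((A *ᵥ U) ⬝ᵥ U) := by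
    set vD : ∀ i, Fin (nd i) → ℝ := fun i => (1 - p i) *ᵥ (R i *ᵥ U) with hvD
    have hvDW : ∀ i, ∀ w ∈ Vs i, ((B i) *ᵥ vD i) ⬝ᵥ w = 0 := by
      intro i w hw
      rw [hvD]
      exact hpW i (R i *ᵥ U) w hw
    have hchoice : ∀ i, ∃ bb : Fin m → ℝ,
        Z *ᵥ bb = ((R i)ᵀ * D i * p i) *ᵥ (R i *ᵥ U) := by
      intro i
      rcases hpV₀ i (R i *ᵥ U) with ⟨bb, hbb⟩
      exact ⟨bb, hbb⟩
    choose bc hbc using hchoice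
    set z : Fin n → ℝ := Z *ᵥ (∑ i, bc i) with hzdef
    have hzsum : z = ∑ i, ((R i)ᵀ * D i * p i) *ᵥ (R i *ᵥ U) := by
      rw [hzdef, mulVec_sumv]
      exact Finset.sum_congr rfl fun i _ => hbc i
    have hPOUU : ∑ i, (R i)ᵀ *ᵥ (D i *ᵥ (R i *ᵥ U)) = U := by
      have h1 : (∑ i, (R i)ᵀ * D i * R i) *ᵥ U = U := by
        rw [hPOU, Matrix.one_mulVec]
      rw [sum_mulVec'] at h1
      calc ∑ i, (R i)ᵀ *ᵥ (D i *ᵥ (R i *ᵥ U))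
          = ∑ i, ((R i)ᵀ * D i * R i) *ᵥ U := by
            refine Finset.sum_congr rfl fun i _ => ?_
            simp only [Matrix.mulVec_mulVec, Matrix.mul_assoc]
        _ = U := h1
    have hsU : ∑ i, (R i)ᵀ *ᵥ (D i *ᵥ vD i) = U - z := by
      calc ∑ i, (R i)ᵀ *ᵥ (D i *ᵥ vD i)
          = ∑ i, ((R i)ᵀ *ᵥ (D i *ᵥ (R i *ᵥ U))
              - ((R i)ᵀ * D i * p i) *ᵥ (R i *ᵥ U)) := by
            refine Finset.sum_congr rfl fun i _ => ?_
            simp only [hvD]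
            rw [Matrix.sub_mulVec, Matrix.one_mulVec, Matrix.mulVec_sub,
              Matrix.mulVec_sub]
            simp only [Matrix.mulVec_mulVec, Matrix.mul_assoc]
        _ = U - z := by rw [Finset.sum_sub_distrib, hPOUU, hzsum]
    refine ⟨Et⁻¹ *ᵥ (Zᵀ *ᵥ (A *ᵥ (U - z))) + ∑ i, bc i, vD, hvDW, ?_, ?_⟩
    · -- representation
      rw [hsU, Matrix.mulVec_add, Matrix.sub_mulVec, Matrix.one_mulVec, ← hzdef,
        ← hPtrange]
      abel
    · -- energy bound
      set u₀ : Fin m → ℝ := Et⁻¹ *ᵥ (Zᵀ *ᵥ (A *ᵥ (U - z))) + ∑ i, bc i with hu₀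
      have hZu₀ : Z *ᵥ u₀ = P0m *ᵥ U + (Ptm - P0m) *ᵥ (U - z) := by
        rw [hu₀, Matrix.mulVec_add, ← hzdef, ← hPtrange, Matrix.sub_mulVec,
          Matrix.mulVec_sub P0m]
        have hP0z : P0m *ᵥ z = z := by rw [hzdef]; exact hP0Z _
        rw [hP0z]
        abel
      have hnegflip : aNorm A ((Ptm - P0m) *ᵥ (U - z))
          = aNorm A ((P0m - Ptm) *ᵥ (U - z)) := by
        have hx : (Ptm - P0m) *ᵥ (U - z) = -((P0m - Ptm) *ᵥ (U - z)) := by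
          rw [Matrix.sub_mulVec, Matrix.sub_mulVec]; abel
        rw [hx]
        simp [aNorm, Matrix.mulVec_neg, dotProduct_neg, neg_dotProduct]
      have hβbound : ∑ i, ((B i) *ᵥ vD i) ⬝ᵥ vD i ≤ (k₁ / τ) * ((A *ᵥ U) ⬝ᵥ U) := by
        have := hGenEO2 U
        calc ∑ i, ((B i) *ᵥ vD i) ⬝ᵥ vD i
            = ∑ j, ((B j) *ᵥ ((1 - p j) *ᵥ ((R j) *ᵥ U)))
                ⬝ᵥ ((1 - p j) *ᵥ ((R j) *ᵥ U)) := by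
              refine Finset.sum_congr rfl fun i _ => ?_
              rw [hvD]
          _ ≤ (k₁ / τ) * ((A *ᵥ U) ⬝ᵥ U) := hGenEO2 U
      have hUz2 : (aNorm A (U - z))^2
          ≤ k₀ * γ * (k₁ / τ) * ((A *ᵥ U) ⬝ᵥ U) := by
        rw [aNorm_sq hApsd, ← hsU]
        have h1 := hk₀bound (fun i => D i *ᵥ vD i)
        have h2 : ∑ i, (A *ᵥ ((R i)ᵀ *ᵥ (D i *ᵥ vD i))) ⬝ᵥ ((R i)ᵀ *ᵥ (D i *ᵥ vD i))
            ≤ γ * ∑ i, ((B i) *ᵥ vD i) ⬝ᵥ vD i := by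
          rw [Finset.mul_sum]
          exact Finset.sum_le_sum fun i _ => hγbound i (vD i) (hvDW i)
        calc (A *ᵥ (∑ i, (R i)ᵀ *ᵥ (D i *ᵥ vD i))) ⬝ᵥ (∑ i, (R i)ᵀ *ᵥ (D i *ᵥ vD i))
            ≤ k₀ * ∑ i, (A *ᵥ ((R i)ᵀ *ᵥ (D i *ᵥ vD i))) ⬝ᵥ ((R i)ᵀ *ᵥ (D i *ᵥ vD i)) := h1
          _ ≤ k₀ * (γ * ∑ i, ((B i) *ᵥ vD i) ⬝ᵥ vD i) :=
              mul_le_mul_of_nonneg_left h2 hk₀.le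
          _ ≤ k₀ * (γ * ((k₁ / τ) * ((A *ᵥ U) ⬝ᵥ U))) := by
              have := mul_le_mul_of_nonneg_left hβbound hγ.le
              exact mul_le_mul_of_nonneg_left this hk₀.le
          _ = k₀ * γ * (k₁ / τ) * ((A *ᵥ U) ⬝ᵥ U) := by ring
      have hcc : k₀ * γ * (k₁ / τ) = k₀ * k₁ * γ / τ := by ring
      have hUznorm : aNorm A (U - z)
          ≤ Real.sqrt (k₀ * k₁ * γ / τ) * aNorm A U := by
        rw [← Real.sqrt_sq (aNorm_nonneg (A := A) (U - z))]
        calc Real.sqrt ((aNorm A (U - z))^2)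
            ≤ Real.sqrt (k₀ * γ * (k₁ / τ) * ((A *ᵥ U) ⬝ᵥ U)) :=
              Real.sqrt_le_sqrt hUz2
          _ = Real.sqrt (k₀ * k₁ * γ / τ) * aNorm A U := by
              rw [hcc, Real.sqrt_mul (by positivity)]; rfl
      have hZu₀norm : aNorm A (Z *ᵥ u₀)
          ≤ (1 + εA * Real.sqrt (k₀ * k₁ * γ / τ)) * aNorm A U := by
        rw [hZu₀]
        have htri := aNorm_triangle hAsym hApsd (P0m *ᵥ U) ((Ptm - P0m) *ᵥ (U - z))
        have hb1 := hP0contr U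
        have hb2' : aNorm A ((Ptm - P0m) *ᵥ (U - z)) ≤ εA * aNorm A (U - z) := by
          rw [hnegflip]; exact hεAbound (U - z)
        have hb3 : εA * aNorm A (U - z)
            ≤ εA * (Real.sqrt (k₀ * k₁ * γ / τ) * aNorm A U) :=
          mul_le_mul_of_nonneg_left hUznorm hεA0
        nlinarith [htri, hb1, hb2', hb3]
      have hEcoarse : (Et *ᵥ u₀) ⬝ᵥ u₀ ≤ (1 / μ') * ((EE *ᵥ u₀) ⬝ᵥ u₀) := by
        have h := (hEμ u₀).1
        have h2 := mul_le_mul_of_nonneg_left h (one_div_pos.mpr hμ').le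
        have h3 : (1/μ') * (μ' * ((Et *ᵥ u₀) ⬝ᵥ u₀)) = (Et *ᵥ u₀) ⬝ᵥ u₀ := by
          field_simp
        linarith
      have hEEnorm : (EE *ᵥ u₀) ⬝ᵥ u₀ = (aNorm A (Z *ᵥ u₀))^2 := by
        rw [aNorm_sq hApsd, hZnorm]
      have hZu₀sq : (aNorm A (Z *ᵥ u₀))^2
          ≤ (1 + εA * Real.sqrt (k₀ * k₁ * γ / τ))^2 * (aNorm A U)^2 := by
        have h := pow_le_pow_left₀ (aNorm_nonneg _) hZu₀norm 2
        rw [mul_pow] at h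
        exact h
      have hnU2 : (aNorm A U)^2 = (A *ᵥ U) ⬝ᵥ U := aNorm_sq hApsd U
      have hfinal1 : (Et *ᵥ u₀) ⬝ᵥ u₀
          ≤ (1 / μ') * ((1 + εA * Real.sqrt (k₀ * k₁ * γ / τ))^2 * ((A *ᵥ U) ⬝ᵥ U)) := by
        rw [← hnU2]
        calc (Et *ᵥ u₀) ⬝ᵥ u₀ ≤ (1 / μ') * ((EE *ᵥ u₀) ⬝ᵥ u₀) := hEcoarse
          _ ≤ (1 / μ') * ((1 + εA * Real.sqrt (k₀ * k₁ * γ / τ))^2 * (aNorm A U)^2) := by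
              rw [hEEnorm]
              exact mul_le_mul_of_nonneg_left hZu₀sq (by positivity)
      rw [hdenomD]
      have hβb := hβbound
      have : ∑ i, ((B i) *ᵥ vD i) ⬝ᵥ vD i ≤ k₁ / τ * ((A *ᵥ U) ⬝ᵥ U) := hβb
      nlinarith [hfinal1, this]
  -- Lemma E : duality
  have hLemE : ∀ (u₀ : Fin m → ℝ) (v : ∀ i, Fin (nd i) → ℝ),
      (∀ i, ∀ w ∈ Vs i, ((B i) *ᵥ v i) ⬝ᵥ w = 0) →
      y ⬝ᵥ (Z *ᵥ u₀ + (1 - Ptm) *ᵥ (∑ i, (R i)ᵀ *ᵥ (D i *ᵥ v i)))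
        = (Et *ᵥ ustar) ⬝ᵥ u₀ + ∑ i, ((B i) *ᵥ vstar i) ⬝ᵥ v i := by
    intro u₀ v hv
    rw [dotProduct_comm]
    exact hpair u₀ v hv
  -- Lemma F : Cauchy-Schwarz for the bilinear form
  have hLemF : ∀ (u₀ : Fin m → ℝ) (v : ∀ i, Fin (nd i) → ℝ),
      ((Et *ᵥ ustar) ⬝ᵥ u₀ + ∑ i, ((B i) *ᵥ vstar i) ⬝ᵥ v i)^2
        ≤ ((Et *ᵥ ustar) ⬝ᵥ ustar + ∑ i, ((B i) *ᵥ vstar i) ⬝ᵥ vstar i)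
          * ((Et *ᵥ u₀) ⬝ᵥ u₀ + ∑ i, ((B i) *ᵥ v i) ⬝ᵥ v i) := by
    intro u₀ v
    have key : ∀ t : ℝ,
        0 ≤ ((Et *ᵥ ustar) ⬝ᵥ ustar + ∑ i, ((B i) *ᵥ vstar i) ⬝ᵥ vstar i) * t^2
          + 2*((Et *ᵥ ustar) ⬝ᵥ u₀ + ∑ i, ((B i) *ᵥ vstar i) ⬝ᵥ v i)*t
          + ((Et *ᵥ u₀) ⬝ᵥ u₀ + ∑ i, ((B i) *ᵥ v i) ⬝ᵥ v i) := by
      intro t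
      have hsum : ∑ i, ((B i) *ᵥ (v i + t • vstar i)) ⬝ᵥ (v i + t • vstar i)
          = (∑ i, ((B i) *ᵥ vstar i) ⬝ᵥ vstar i) * t^2
            + 2*(∑ i, ((B i) *ᵥ (v i)) ⬝ᵥ vstar i)*t
            + ∑ i, ((B i) *ᵥ v i) ⬝ᵥ v i := by
        rw [Finset.sum_congr rfl (fun i _ => quad_expand (hBsym i) (v i) (vstar i) t)]
        rw [Finset.sum_add_distrib, Finset.sum_add_distrib, ← Finset.sum_mul]
        have hmid : ∑ i, 2*(((B i) *ᵥ (v i)) ⬝ᵥ vstar i)*t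
            = 2*(∑ i, ((B i) *ᵥ (v i)) ⬝ᵥ vstar i)*t := by
          rw [← Finset.sum_mul, Finset.mul_sum]
        rw [hmid]
      have h0 : 0 ≤ (Et *ᵥ (u₀ + t • ustar)) ⬝ᵥ (u₀ + t • ustar)
          + ∑ i, ((B i) *ᵥ (v i + t • vstar i)) ⬝ᵥ (v i + t • vstar i) :=
        add_nonneg (hEtpsd _) (Finset.sum_nonneg fun i _ => hBpsd i _)
      rw [quad_expand hEtsym u₀ ustar t, hsum] at h0
      have hbE : (Et *ᵥ u₀) ⬝ᵥ ustar = (Et *ᵥ ustar) ⬝ᵥ u₀ := dot_symm hEtsym u₀ ustar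
      have hbi : ∑ i, ((B i) *ᵥ (v i)) ⬝ᵥ vstar i = ∑ i, ((B i) *ᵥ vstar i) ⬝ᵥ v i :=
        Finset.sum_congr rfl fun i _ => dot_symm (hBsym i) (v i) (vstar i)
      rw [hbE, hbi] at h0
      linarith
    exact quad_nonneg_sq_le key
  -- assembly
  set P : ℝ := (A *ᵥ U) ⬝ᵥ U with hP
  have hPpos : 0 < P := hAdotpos U hU
  set bstar : ℝ := (Et *ᵥ ustar) ⬝ᵥ ustar + ∑ i, ((B i) *ᵥ vstar i) ⬝ᵥ vstar i with hbstar
  have hbstar0 : 0 ≤ bstar := by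
    have := hEtpsd ustar
    have hsum : 0 ≤ ∑ i, ((B i) *ᵥ vstar i) ⬝ᵥ vstar i :=
      Finset.sum_nonneg fun i _ => hBpsd i (vstar i)
    rw [hbstar]; linarith
  have hblam : bstar = lam * P := by
    rw [← hLemB, hCy]
    rw [smul_dotProduct, hP, hy, smul_eq_mul]
    rw [dotProduct_comm]
  obtain ⟨u₀, v, hvW, hrep, hbound⟩ := hLemD
  -- lower bound
  have hdual : P = (Et *ᵥ ustar) ⬝ᵥ u₀ + ∑ i, ((B i) *ᵥ vstar i) ⬝ᵥ v i := by
    rw [← hLemE u₀ v hvW, hrep, hP, hy, dotProduct_comm]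
  have hsq : P^2 ≤ bstar * (denomD * P) := by
    calc P^2 = ((Et *ᵥ ustar) ⬝ᵥ u₀ + ∑ i, ((B i) *ᵥ vstar i) ⬝ᵥ v i)^2 := by rw [← hdual]
      _ ≤ bstar * ((Et *ᵥ u₀) ⬝ᵥ u₀ + ∑ i, ((B i) *ᵥ v i) ⬝ᵥ v i) := hLemF u₀ v
      _ ≤ bstar * (denomD * P) := by
          exact mul_le_mul_of_nonneg_left (by rw [hP]; exact hbound) hbstar0
  have hlow : cT ≤ lam := by
    rw [hblam] at hsq
    have h1 : 1 ≤ lam * denomD := by nlinarith [hsq, hPpos, mul_pos hPpos hPpos]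
    rw [hcT, div_le_iff₀ hdenompos]
    linarith
  refine ⟨hlow, ?_⟩
  -- upper bound
  have hlampos : 0 < lam := by
    have hcTpos : 0 < cT := by rw [hcT]; positivity
    linarith
  have hupper : lam^2 * P ≤ cR * (lam * P) := by
    have hC := hLemC ustar vstar hWstar
    rw [← hsstar, hCy] at hC
    have hnl : (aNorm A (lam • U))^2 = lam^2 * P := by
      rw [aNorm_sq hApsd, Matrix.mulVec_smul, smul_dotProduct,
        dotProduct_smul, hP, smul_eq_mul, smul_eq_mul]
      ring
    rw [hnl] at hC
    calc lam^2 * P ≤ cR * bstar := hC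
      _ = cR * (lam * P) := by rw [hblam]
  nlinarith [hupper, hlampos, hPpos, mul_pos hlampos hPpos]
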